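/- Under uniform initialization (the mutant-appearance distribution μ_A with μ_A(𝟏_{{i}}) = 1/N for each i, where 𝟏_{{i}} is the state with a single A at site i), the unique solution of the system η^{μ_A}_I = E°_{μ_A}[ξ̂ − ξ_I] + Σ_{(R,α)} p°_{(R,α)} η^{μ_A}_{α̃(I)} (for 1 ≤ |I| ≤ D+1) with Σ_i π_i η^{μ_A}_{{i}} = 0 satisfies: η^{μ_A}_{{i}} = 0 for every singleton {i}, and for every I with |I| ≥ 2, η^{μ_A}_I equals (1/N) times the expected number of steps for the coalescent chain 𝒞 to reach a singleton set when started from I. -/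

import Mathlib

open Finset Filter Asymptotics Topology

namespace Evo

/-- A population state: each of the `N` individuals has type `A` (`true`) or `B` (`false`). -/
abbrev St (N : ℕ) := Fin N → Bool

/-- A replacement event `(R, α)`: the set `R` of replaced individuals together with a
parentage map (only the values on `R` are relevant). -/
abbrev Event (N : ℕ) := Finset (Fin N) × (Fin N → Fin N)

/-- The extended parentage map `α̃`, equal to `α` on `R` and the identity off `R`. -/
def extMap {N : ℕ} (e : Event N) (i : Fin N) : Fin N := if i ∈ e.1 then e.2 i else i

/-- The state update induced by a replacement event: `x ↦ x_α̃`. -/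
def upd {N : ℕ} (e : Event N) (x : St N) : St N := fun i => x (extMap e i)

/-- Boolean values as reals. -/
def bv (b : Bool) : ℝ := if b then 1 else 0

/-- The all-`A` state. -/
def stA (N : ℕ) : St N := fun _ => true

/-- The all-`B` state. -/
def stB (N : ℕ) : St N := fun _ => false

/-- Transient (non-monoallelic) states, i.e. members of `𝔹_T^N`. -/
def Transient {N : ℕ} (x : St N) : Prop := x ≠ stA N ∧ x ≠ stB N

/-- A replacement rule: for each state, a probability distribution over replacement events. -/
def IsRule {N : ℕ} (p : St N → Event N → ℝ) : Prop :=
  (∀ x e, 0 ≤ p x e) ∧ ∀ x, ∑ e : Event N, p x e = 1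

/-- A state-independent distribution over replacement events (a neutral replacement rule). -/
def IsDist {N : ℕ} (p0 : Event N → ℝ) : Prop :=
  (∀ e, 0 ≤ p0 e) ∧ ∑ e : Event N, p0 e = 1

/-- Transition matrix of the Markov chain induced by a replacement rule. -/
def tmat {N : ℕ} (p : St N → Event N → ℝ) : Matrix (St N) (St N) ℝ :=
  Matrix.of fun x y => ∑ e : Event N, if upd e x = y then p x e else 0

/-- The Fixation Axiom. -/
def FixAxiom {N : ℕ} (p : St N → Event N → ℝ) : Prop :=
  ∃ (i : Fin N) (m : ℕ) (ev : Fin m → Event N), 1 ≤ m ∧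
    (∀ k x, 0 < p x (ev k)) ∧ (∃ k, i ∈ (ev k).1) ∧
    (∀ j, (List.ofFn fun k => extMap (ev k)).foldr (· ∘ ·) id j = i)

/-- The sojourn time `t_ξ(x)`: expected number of visits to `x` prior to absorption,
starting from `ξ` (expressed as `Σ_t (P^t)(ξ, x)`). -/
noncomputable def sojourn {N : ℕ} (p : St N → Event N → ℝ) (ξ x : St N) : ℝ :=
  ∑' t : ℕ, (tmat p ^ t) ξ x

/-- The operator `⟨φ⟩_ξ = Σ_{t=0}^∞ E[φ(x^t) | x⁰ = ξ]` for the chain with rule `p`. -/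
noncomputable def sgen {N : ℕ} (p : St N → Event N → ℝ) (ξ : St N) (φ : St N → ℝ) : ℝ :=
  ∑' t : ℕ, ∑ x : St N, (tmat p ^ t) ξ x * φ x

/-- The marginal probability `e_ij` that `i` transmits its offspring to `j`,
for a distribution `q` over replacement events. -/
def emarg {N : ℕ} (q : Event N → ℝ) (i j : Fin N) : ℝ :=
  ∑ e : Event N, if j ∈ e.1 ∧ e.2 j = i then q e else 0

/-- `π` is the vector of reproductive values for the neutral rule `p°`:
`Σ_j e°_ij π_j = Σ_j e°_ji π_i` for all `i`, and `Σ_i π_i = 1`. -/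
def IsRV {N : ℕ} (p0 : Event N → ℝ) (π : Fin N → ℝ) : Prop :=
  (∀ i, ∑ j, emarg p0 i j * π j = ∑ j, emarg p0 j i * π i) ∧ (∑ i, π i = 1)

/-- The reproductive-value-weighted frequency `x̂ = Σ_i π_i x_i`. -/
def hatx {N : ℕ} (π : Fin N → ℝ) (x : St N) : ℝ := ∑ i, π i * bv (x i)

/-- The multilinear monomial `x_I = Π_{i ∈ I} x_i`. -/
def prodI {N : ℕ} (x : St N) (I : Finset (Fin N)) : ℝ := ∏ i ∈ I, bv (x i)

/-- The linear system defining the sojourn quantities `η_I`: for every nonempty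
`I ⊆ {1,…,N}` with `|I| ≤ D + 1`, `η_I = E(I) + Σ_{(R,α)} p°_{(R,α)} η_{α̃(I)}`,
together with the normalization `Σ_i π_i η_{{i}} = 0`. -/
def EtaSystem {N : ℕ} (p0 : Event N → ℝ) (π : Fin N → ℝ) (E : Finset (Fin N) → ℝ)
    (D : ℕ) (η : Finset (Fin N) → ℝ) : Prop :=
  (∀ I : Finset (Fin N), 1 ≤ I.card → I.card ≤ D + 1 →
    η I = E I + ∑ e : Event N, p0 e * η (I.image (extMap e))) ∧
  (∑ i, π i * η {i} = 0)

/-- Transition matrix of the coalescent chain on all subsets of `{1,…,N}`. -/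
def cmatAll {N : ℕ} (p0 : Event N → ℝ) : Matrix (Finset (Fin N)) (Finset (Fin N)) ℝ :=
  Matrix.of fun I J => ∑ e : Event N, if I.image (extMap e) = J then p0 e else 0

/-- The expected number of steps for the coalescent chain to reach a singleton set when
started from `I` (expressed as `Σ_t P[|𝒞_t| ≥ 2]`). -/
noncomputable def coalTime {N : ℕ} (p0 : Event N → ℝ) (I : Finset (Fin N)) : ℝ :=
  ∑' t : ℕ, ∑ J ∈ Finset.univ.filter (fun J : Finset (Fin N) => 2 ≤ J.card),
    (cmatAll p0 ^ t) I J

/-- The state `𝟏_{{v}}` with a single `A` at site `v`. -/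
def oneAt {N : ℕ} (v : Fin N) : St N := fun i => if i = v then true else false

section Aux

variable {N : ℕ}

lemma cmat_nonneg (p0 : Event N → ℝ) (hp0 : IsDist p0) (I J : Finset (Fin N)) :
    0 ≤ cmatAll p0 I J := by
  apply Finset.sum_nonneg
  intro e _
  split
  · exact hp0.1 e
  · exact le_rfl

lemma cmat_pow_nonneg (p0 : Event N → ℝ) (hp0 : IsDist p0) (t : ℕ) (I J : Finset (Fin N)) :
    0 ≤ (cmatAll p0 ^ t) I J := by
  induction t generalizing I J with
  | zero =>
    simp only [pow_zero, Matrix.one_apply]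
    split <;> norm_num
  | succ t ih =>
    rw [pow_succ', Matrix.mul_apply]
    exact Finset.sum_nonneg fun K _ => mul_nonneg (cmat_nonneg p0 hp0 I K) (ih K J)

lemma cmat_rowsum (p0 : Event N → ℝ) (hp0 : IsDist p0) (I : Finset (Fin N)) :
    ∑ J, cmatAll p0 I J = 1 := by
  unfold cmatAll
  simp only [Matrix.of_apply]
  rw [Finset.sum_comm]
  calc ∑ e : Event N, ∑ J : Finset (Fin N), (if I.image (extMap e) = J then p0 e else 0)
      = ∑ e : Event N, p0 e := by
        apply Finset.sum_congr rfl
        intro e _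
        rw [Finset.sum_ite_eq]
        simp
    _ = 1 := hp0.2

lemma cmat_pow_rowsum (p0 : Event N → ℝ) (hp0 : IsDist p0) (t : ℕ) (I : Finset (Fin N)) :
    ∑ J, (cmatAll p0 ^ t) I J = 1 := by
  induction t generalizing I with
  | zero => simp [Matrix.one_apply]
  | succ t ih =>
    simp only [pow_succ', Matrix.mul_apply]
    rw [Finset.sum_comm]
    calc ∑ K : Finset (Fin N), ∑ J : Finset (Fin N), cmatAll p0 I K * (cmatAll p0 ^ t) K J
        = ∑ K : Finset (Fin N), cmatAll p0 I K * ∑ J, (cmatAll p0 ^ t) K J := by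
          simp [Finset.mul_sum]
      _ = ∑ K : Finset (Fin N), cmatAll p0 I K := by
          apply Finset.sum_congr rfl
          intro K _
          rw [ih K, mul_one]
      _ = 1 := cmat_rowsum p0 hp0 I

/-- `fW p0 t I` is the probability that the coalescent chain started at `I` has
at least two lineages at time `t`. -/
noncomputable def fW (p0 : Event N → ℝ) (t : ℕ) (I : Finset (Fin N)) : ℝ :=
  ∑ J ∈ Finset.univ.filter (fun J : Finset (Fin N) => 2 ≤ J.card), (cmatAll p0 ^ t) I J

lemma coalTime_eq_tsum_fW (p0 : Event N → ℝ) (I : Finset (Fin N)) :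
    coalTime p0 I = ∑' t, fW p0 t I := rfl

lemma fW_nonneg (p0 : Event N → ℝ) (hp0 : IsDist p0) (t : ℕ) (I : Finset (Fin N)) :
    0 ≤ fW p0 t I :=
  Finset.sum_nonneg fun J _ => cmat_pow_nonneg p0 hp0 t I J

lemma fW_le_one (p0 : Event N → ℝ) (hp0 : IsDist p0) (t : ℕ) (I : Finset (Fin N)) :
    fW p0 t I ≤ 1 := by
  calc fW p0 t I ≤ ∑ J, (cmatAll p0 ^ t) I J := by
        apply Finset.sum_le_sum_of_subset_of_nonneg (Finset.filter_subset _ _)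
        intro J _ _
        exact cmat_pow_nonneg p0 hp0 t I J
    _ = 1 := cmat_pow_rowsum p0 hp0 t I

lemma fW_zero (p0 : Event N → ℝ) (I : Finset (Fin N)) :
    fW p0 0 I = if 2 ≤ I.card then 1 else 0 := by
  unfold fW
  simp only [pow_zero, Matrix.one_apply]
  rw [Finset.sum_ite_eq]
  simp

lemma fW_add (p0 : Event N → ℝ) (s t : ℕ) (I : Finset (Fin N)) :
    fW p0 (s + t) I = ∑ K, (cmatAll p0 ^ s) I K * fW p0 t K := by
  unfold fW
  simp only [pow_add, Matrix.mul_apply]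
  rw [Finset.sum_comm]
  simp [Finset.mul_sum]

lemma fW_succ (p0 : Event N → ℝ) (t : ℕ) (I : Finset (Fin N)) :
    fW p0 (t + 1) I = ∑ K, cmatAll p0 I K * fW p0 t K := by
  rw [show t + 1 = 1 + t from add_comm t 1, fW_add p0 1 t I]
  simp

lemma fW_small (p0 : Event N → ℝ) (hp0 : IsDist p0) (t : ℕ) (I : Finset (Fin N))
    (hI : I.card ≤ 1) : fW p0 t I = 0 := by
  induction t generalizing I with
  | zero => rw [fW_zero]; simp [show ¬ (2 ≤ I.card) from by omega]
  | succ t ih =>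
    rw [fW_succ]
    apply Finset.sum_eq_zero
    intro K _
    by_cases h : cmatAll p0 I K = 0
    · rw [h, zero_mul]
    · obtain ⟨e, _, he⟩ := Finset.exists_ne_zero_of_sum_ne_zero h
      have hK : I.image (extMap e) = K := by
        by_contra hc
        simp [hc] at he
      have : K.card ≤ 1 := hK ▸ le_trans (Finset.card_image_le) hI
      rw [ih K this, mul_zero]

lemma pathBound (p0 : Event N → ℝ) (hp0 : IsDist p0) :
    ∀ (L : List (Event N)) (I : Finset (Fin N)),
    (L.map p0).prod ≤ (cmatAll p0 ^ L.length) I (L.foldr (fun e J => J.image (extMap e)) I) := by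
  intro L
  induction L with
  | nil => intro I; simp [Matrix.one_apply]
  | cons e L ih =>
    intro I
    have hprod : 0 ≤ (L.map p0).prod := by
      apply List.prod_nonneg
      intro x hx
      obtain ⟨e', _, rfl⟩ := List.mem_map.mp hx
      exact hp0.1 e'
    set K0 := L.foldr (fun e J => J.image (extMap e)) I with hK0
    set J1 := K0.image (extMap e) with hJ1
    have h1 : p0 e ≤ cmatAll p0 K0 J1 := by
      unfold cmatAll
      simp only [Matrix.of_apply]
      have := Finset.single_le_sum
        (f := fun e' : Event N => if K0.image (extMap e') = J1 then p0 e' else 0)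
        (fun e' _ => by split; exacts [hp0.1 e', le_rfl]) (Finset.mem_univ e)
      simpa [hJ1] using this
    have h2 : cmatAll p0 K0 J1 * (L.map p0).prod ≤ (cmatAll p0 ^ (L.length + 1)) I J1 := by
      rw [pow_succ, Matrix.mul_apply]
      have hle : cmatAll p0 K0 J1 * (L.map p0).prod
          ≤ (cmatAll p0 ^ L.length) I K0 * cmatAll p0 K0 J1 := by
        rw [mul_comm]
        exact mul_le_mul_of_nonneg_right (ih I) (cmat_nonneg p0 hp0 K0 J1)
      refine le_trans hle ?_
      exact Finset.single_le_sum
        (f := fun K => (cmatAll p0 ^ L.length) I K * cmatAll p0 K J1)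
        (fun K _ => mul_nonneg (cmat_pow_nonneg p0 hp0 _ I K) (cmat_nonneg p0 hp0 K J1))
        (Finset.mem_univ K0)
    calc ((e :: L).map p0).prod = p0 e * (L.map p0).prod := by simp
      _ ≤ cmatAll p0 K0 J1 * (L.map p0).prod :=
          mul_le_mul_of_nonneg_right h1 hprod
      _ ≤ (cmatAll p0 ^ (L.length + 1)) I J1 := h2
      _ = (cmatAll p0 ^ (e :: L).length) I ((e :: L).foldr (fun e J => J.image (extMap e)) I) := by
          simp [hJ1, hK0]

lemma foldr_image (L : List (Event N)) (I : Finset (Fin N)) :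
    L.foldr (fun e J => J.image (extMap e)) I
      = I.image ((L.map (fun e => extMap e)).foldr (· ∘ ·) id) := by
  induction L with
  | nil => simp
  | cons e L ih => simp [ih, Finset.image_image]

lemma p0_le_one (p0 : Event N → ℝ) (hp0 : IsDist p0) (e : Event N) : p0 e ≤ 1 := by
  calc p0 e ≤ ∑ e', p0 e' :=
        Finset.single_le_sum (fun e' _ => hp0.1 e') (Finset.mem_univ e)
    _ = 1 := hp0.2

lemma summable_fW (p0 : Event N → ℝ) (hp0 : IsDist p0)
    (hfix : FixAxiom fun _ : St N => p0) (I : Finset (Fin N)) :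
    Summable (fun t => fW p0 t I) := by
  obtain ⟨i0, m, ev, hm, hpos, -, hcomp⟩ := hfix
  have hpos' : ∀ k, 0 < p0 (ev k) := fun k => hpos k (stA N)
  set q : ℝ := ∏ k, p0 (ev k) with hqdef
  have hq : 0 < q := Finset.prod_pos fun k _ => hpos' k
  have hq1 : q ≤ 1 :=
    Finset.prod_le_one (fun k _ => (hpos' k).le) (fun k _ => p0_le_one p0 hp0 _)
  have hne : (Finset.univ : Finset (Finset (Fin N))).Nonempty := ⟨∅, Finset.mem_univ _⟩
  set g : ℕ → ℝ := fun t => Finset.univ.sup' hne (fW p0 t) with hgdef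
  have hfg : ∀ t (J : Finset (Fin N)), fW p0 t J ≤ g t :=
    fun t J => Finset.le_sup' _ (Finset.mem_univ J)
  have hg0 : ∀ t, 0 ≤ g t := by
    intro t
    have := hfg t ∅
    rwa [fW_small p0 hp0 t ∅ (by simp)] at this
  have hg1 : ∀ t, g t ≤ 1 := fun t =>
    Finset.sup'_le _ _ fun J _ => fW_le_one p0 hp0 t J
  have hstep : ∀ u, g (u + 1) ≤ g u := by
    intro u
    apply Finset.sup'_le
    intro J _
    rw [fW_succ]
    calc ∑ K, cmatAll p0 J K * fW p0 u K ≤ ∑ K, cmatAll p0 J K * g u :=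
          Finset.sum_le_sum fun K _ =>
            mul_le_mul_of_nonneg_left (hfg u K) (cmat_nonneg p0 hp0 J K)
      _ = g u := by rw [← Finset.sum_mul, cmat_rowsum p0 hp0 J, one_mul]
  have hgmono : ∀ t s, g (t + s) ≤ g t := by
    intro t s
    induction s with
    | zero => exact le_rfl
    | succ s ih => exact le_trans (hstep (t + s)) ih
  -- the key positivity of reaching a small set in m steps
  have hkey : ∀ J : Finset (Fin N),
      q ≤ ∑ K ∈ Finset.univ.filter (fun K : Finset (Fin N) => K.card ≤ 1),
        (cmatAll p0 ^ m) J K := by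
    intro J
    set L : List (Event N) := List.ofFn ev with hL
    have hlen : L.length = m := List.length_ofFn
    have hfold : L.foldr (fun e J => J.image (extMap e)) J
        = J.image ((List.ofFn fun k => extMap (ev k)).foldr (· ∘ ·) id) := by
      rw [foldr_image]
      congr 1
      rw [hL, List.map_ofFn]
      rfl
    have hcard : (L.foldr (fun e J => J.image (extMap e)) J).card ≤ 1 := by
      rw [hfold]
      apply Finset.card_le_one.mpr
      intro a ha b hb
      obtain ⟨x, _, hx⟩ := Finset.mem_image.mp ha
      obtain ⟨y, _, hy⟩ := Finset.mem_image.mp hb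
      rw [← hx, ← hy, hcomp x, hcomp y]
    have hq' : q ≤ (cmatAll p0 ^ m) J (L.foldr (fun e J => J.image (extMap e)) J) := by
      have hpb := pathBound p0 hp0 L J
      rw [hlen] at hpb
      refine le_trans (le_of_eq ?_) hpb
      rw [hqdef, hL, List.map_ofFn, List.prod_ofFn]
      rfl
    refine le_trans hq' ?_
    exact Finset.single_le_sum
      (f := fun K => (cmatAll p0 ^ m) J K)
      (fun K _ => cmat_pow_nonneg p0 hp0 m J K)
      (by simp [hcard])
  -- decay
  have hfilt : ∀ J : Finset (Fin N),
      ∑ K ∈ Finset.univ.filter (fun K : Finset (Fin N) => 2 ≤ K.card),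
        (cmatAll p0 ^ m) J K ≤ 1 - q := by
    intro J
    have hsplit := Finset.sum_filter_add_sum_filter_not Finset.univ
      (fun K : Finset (Fin N) => 2 ≤ K.card) (fun K => (cmatAll p0 ^ m) J K)
    rw [cmat_pow_rowsum p0 hp0 m J] at hsplit
    have hfeq : Finset.univ.filter (fun K : Finset (Fin N) => ¬ 2 ≤ K.card)
        = Finset.univ.filter (fun K : Finset (Fin N) => K.card ≤ 1) := by
      apply Finset.filter_congr
      intro K _
      omega
    rw [hfeq] at hsplit
    have := hkey J
    linarith
  have hdec : ∀ t, g (t + m) ≤ (1 - q) * g t := by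
    intro t
    apply Finset.sup'_le
    intro J _
    rw [show t + m = m + t from add_comm t m, fW_add p0 m t J]
    have hrestrict : ∑ K, (cmatAll p0 ^ m) J K * fW p0 t K
        = ∑ K ∈ Finset.univ.filter (fun K : Finset (Fin N) => 2 ≤ K.card),
            (cmatAll p0 ^ m) J K * fW p0 t K := by
      symm
      apply Finset.sum_subset (Finset.filter_subset _ _)
      intro K _ hK
      have : K.card ≤ 1 := by
        simp only [Finset.mem_filter, Finset.mem_univ, true_and, not_le] at hK
        omega
      rw [fW_small p0 hp0 t K this, mul_zero]
    rw [hrestrict]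
    calc ∑ K ∈ Finset.univ.filter (fun K : Finset (Fin N) => 2 ≤ K.card),
          (cmatAll p0 ^ m) J K * fW p0 t K
        ≤ ∑ K ∈ Finset.univ.filter (fun K : Finset (Fin N) => 2 ≤ K.card),
            (cmatAll p0 ^ m) J K * g t :=
          Finset.sum_le_sum fun K _ =>
            mul_le_mul_of_nonneg_left (hfg t K) (cmat_pow_nonneg p0 hp0 m J K)
      _ = (∑ K ∈ Finset.univ.filter (fun K : Finset (Fin N) => 2 ≤ K.card),
            (cmatAll p0 ^ m) J K) * g t := by rw [Finset.sum_mul]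
      _ ≤ (1 - q) * g t := mul_le_mul_of_nonneg_right (hfilt J) (hg0 t)
  have hgeomk : ∀ k, g (k * m) ≤ (1 - q) ^ k := by
    intro k
    induction k with
    | zero => simpa using hg1 0
    | succ k ih =>
      have : g ((k + 1) * m) ≤ (1 - q) * g (k * m) := by
        rw [show (k + 1) * m = k * m + m by ring]
        exact hdec (k * m)
      calc g ((k + 1) * m) ≤ (1 - q) * g (k * m) := this
        _ ≤ (1 - q) * (1 - q) ^ k :=
            mul_le_mul_of_nonneg_left ih (by linarith)
        _ = (1 - q) ^ (k + 1) := by ring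
  have hgeomsum : ∀ k, ∑ j ∈ Finset.range k, (1 - q) ^ j ≤ 1 / q := by
    intro k
    rw [le_div_iff₀ hq, mul_comm]
    have htel : ∑ j ∈ Finset.range k, (q * (1 - q) ^ j)
        = ∑ j ∈ Finset.range k, ((1 - q) ^ j - (1 - q) ^ (j + 1)) := by
      apply Finset.sum_congr rfl
      intro j _
      ring
    rw [Finset.mul_sum, htel, Finset.sum_range_sub']
    have : (0:ℝ) ≤ (1 - q) ^ k := pow_nonneg (by linarith) k
    simp only [pow_zero]
    linarith
  have hpart : ∀ k, ∑ t ∈ Finset.range (k * m), g t ≤ m * (1 / q) := by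
    intro k
    have h1 : ∑ t ∈ Finset.range (k * m), g t
        ≤ (m : ℝ) * ∑ j ∈ Finset.range k, (1 - q) ^ j := by
      induction k with
      | zero => simp
      | succ k ih =>
        rw [show (k + 1) * m = k * m + m by ring, Finset.sum_range_add,
          Finset.sum_range_succ]
        have h2 : ∑ x ∈ Finset.range m, g (k * m + x) ≤ (m : ℝ) * (1 - q) ^ k := by
          calc ∑ x ∈ Finset.range m, g (k * m + x)
              ≤ ∑ _x ∈ Finset.range m, g (k * m) :=
                Finset.sum_le_sum fun x _ => hgmono (k * m) x
            _ = (m : ℝ) * g (k * m) := by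
                rw [Finset.sum_const, Finset.card_range, nsmul_eq_mul]
            _ ≤ (m : ℝ) * (1 - q) ^ k :=
                mul_le_mul_of_nonneg_left (hgeomk k) (by positivity)
        calc ∑ t ∈ Finset.range (k * m), g t + ∑ x ∈ Finset.range m, g (k * m + x)
            ≤ (m : ℝ) * ∑ j ∈ Finset.range k, (1 - q) ^ j + (m : ℝ) * (1 - q) ^ k := by
              exact add_le_add ih h2
          _ = (m : ℝ) * (∑ j ∈ Finset.range k, (1 - q) ^ j + (1 - q) ^ k) := by ring
    exact le_trans h1 (mul_le_mul_of_nonneg_left (hgeomsum k) (by positivity))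
  apply summable_of_sum_range_le (c := (m : ℝ) * (1 / q))
    (fun t => fW_nonneg p0 hp0 t I)
  intro n
  calc ∑ t ∈ Finset.range n, fW p0 t I ≤ ∑ t ∈ Finset.range n, g t :=
        Finset.sum_le_sum fun t _ => hfg t I
    _ ≤ ∑ t ∈ Finset.range (n * m), g t := by
        apply Finset.sum_le_sum_of_subset_of_nonneg
        · exact Finset.range_subset_range.mpr (Nat.le_mul_of_pos_right n (by omega))
        · intro t _ _
          exact hg0 t
    _ ≤ (m : ℝ) * (1 / q) := hpart n

lemma coal_rec (p0 : Event N → ℝ) (hp0 : IsDist p0)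
    (hfix : FixAxiom fun _ : St N => p0) (I : Finset (Fin N)) :
    coalTime p0 I = (if 2 ≤ I.card then 1 else 0)
      + ∑ e : Event N, p0 e * coalTime p0 (I.image (extMap e)) := by
  have hsum : ∀ J : Finset (Fin N), Summable (fun t => fW p0 t J) :=
    summable_fW p0 hp0 hfix
  rw [coalTime_eq_tsum_fW, Summable.tsum_eq_zero_add (hsum I), fW_zero]
  congr 1
  calc ∑' t, fW p0 (t + 1) I = ∑' t, ∑ K, cmatAll p0 I K * fW p0 t K := by
        simp_rw [fW_succ]
    _ = ∑ K, ∑' t, cmatAll p0 I K * fW p0 t K :=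
        Summable.tsum_finsetSum (fun K _ => (hsum K).mul_left _)
    _ = ∑ K, cmatAll p0 I K * coalTime p0 K := by
        apply Finset.sum_congr rfl
        intro K _
        rw [tsum_mul_left, coalTime_eq_tsum_fW]
    _ = ∑ e : Event N, p0 e * coalTime p0 (I.image (extMap e)) := by
        unfold cmatAll
        simp only [Matrix.of_apply, Finset.sum_mul, ite_mul, zero_mul]
        rw [Finset.sum_comm]
        apply Finset.sum_congr rfl
        intro e _
        rw [Finset.sum_ite_eq]
        simp

lemma coalTime_small (p0 : Event N → ℝ) (hp0 : IsDist p0) (I : Finset (Fin N))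
    (hI : I.card ≤ 1) : coalTime p0 I = 0 := by
  rw [coalTime_eq_tsum_fW]
  have : ∀ t, fW p0 t I = 0 := fun t => fW_small p0 hp0 t I hI
  simp [this]

lemma harm_eq (p0 : Event N → ℝ) (hp0 : IsDist p0)
    (hfix : FixAxiom fun _ : St N => p0)
    (S : Finset (Finset (Fin N))) (hSne : S.Nonempty)
    (hS : ∀ I ∈ S, (I : Finset (Fin N)).Nonempty)
    (hcl : ∀ I ∈ S, ∀ e : Event N, I.image (extMap e) ∈ S)
    (d : Finset (Fin N) → ℝ)
    (hharm : ∀ I ∈ S, d I = ∑ e : Event N, p0 e * d (I.image (extMap e))) :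
    ∀ I ∈ S, ∀ J ∈ S, d I = d J := by
  obtain ⟨i0, m, ev, hm, hpos, -, hcomp⟩ := hfix
  have hpos' : ∀ k, 0 < p0 (ev k) := fun k => hpos k (stA N)
  -- reachability of {i0} through positive-probability events
  have reach : ∀ (Q : Finset (Fin N) → Prop),
      (∀ I, Q I → ∀ e : Event N, 0 < p0 e → Q (I.image (extMap e))) →
      ∀ I, Q I → I.Nonempty → Q {i0} := by
    intro Q hQ I hI hIne
    have key : ∀ L : List (Event N), (∀ e ∈ L, 0 < p0 e) →
        Q (L.foldr (fun e J => J.image (extMap e)) I) := by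
      intro L
      induction L with
      | nil => intro _; simpa using hI
      | cons e L ih =>
        intro h
        exact hQ _ (ih fun e' he' => h e' (List.mem_cons_of_mem e he'))
          e (h e List.mem_cons_self)
    have h2 := key (List.ofFn ev) (by
      intro e he
      obtain ⟨k, hk⟩ := List.mem_ofFn.mp he
      exact hk ▸ hpos' k)
    have hfold : (List.ofFn ev).foldr (fun e J => J.image (extMap e)) I = {i0} := by
      rw [foldr_image]
      have hmap : (List.ofFn ev).map (fun e => extMap e)
          = List.ofFn fun k => extMap (ev k) := by rw [List.map_ofFn]; rfl
      rw [hmap]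
      have : I.image ((List.ofFn fun k => extMap (ev k)).foldr (· ∘ ·) id)
          = I.image (fun _ => i0) :=
        Finset.image_congr (fun j _ => hcomp j)
      rw [this, Finset.image_const hIne]
    rwa [hfold] at h2
  -- maximum principle: the set of maximizers is closed
  have main : ∀ (d' : Finset (Fin N) → ℝ),
      (∀ I ∈ S, d' I = ∑ e : Event N, p0 e * d' (I.image (extMap e))) →
      ∀ (c : ℝ), (∀ I ∈ S, d' I ≤ c) →
      ∀ I, (I ∈ S ∧ d' I = c) → d' {i0} = c := by
    intro d hharm c hc I hI
    have hQ : ∀ J, (J ∈ S ∧ d J = c) → ∀ e : Event N, 0 < p0 e →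
        ((J.image (extMap e)) ∈ S ∧ d (J.image (extMap e)) = c) := by
      intro J hJ e he
      refine ⟨hcl J hJ.1 e, ?_⟩
      have hsum0 : ∑ e' : Event N, p0 e' * (c - d (J.image (extMap e'))) = 0 := by
        have h1 := hharm J hJ.1
        have h2 : ∑ e' : Event N, p0 e' * (c - d (J.image (extMap e')))
            = (∑ e' : Event N, p0 e') * c - ∑ e' : Event N, p0 e' * d (J.image (extMap e')) := by
          rw [Finset.sum_mul, ← Finset.sum_sub_distrib]
          apply Finset.sum_congr rfl
          intro e' _
          ring
        rw [h2, hp0.2, one_mul, ← h1, hJ.2, sub_self]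
      have hnn : ∀ e' ∈ (Finset.univ : Finset (Event N)),
          0 ≤ p0 e' * (c - d (J.image (extMap e'))) := by
        intro e' _
        exact mul_nonneg (hp0.1 e') (sub_nonneg.2 (hc _ (hcl J hJ.1 e')))
      have := (Finset.sum_eq_zero_iff_of_nonneg hnn).mp hsum0 e (Finset.mem_univ e)
      have h3 : c - d (J.image (extMap e)) = 0 := by
        rcases mul_eq_zero.mp this with h | h
        · exact absurd h (ne_of_gt he)
        · exact h
      linarith
    exact (reach _ hQ I hI (hS I hI.1)).2
  obtain ⟨Imax, hImax, hImax2⟩ := Finset.exists_mem_eq_sup' hSne d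
  obtain ⟨Imin, hImin, hImin2⟩ := Finset.exists_mem_eq_inf' hSne d
  have hmax : d {i0} = S.sup' hSne d :=
    main d hharm _ (fun I hI => Finset.le_sup' d hI) Imax ⟨hImax, hImax2.symm⟩
  have hmin : d {i0} = S.inf' hSne d := by
    have hharm' : ∀ I ∈ S, (fun K => - d K) I
        = ∑ e : Event N, p0 e * (fun K => - d K) (I.image (extMap e)) := by
      intro I hI
      simp only
      rw [hharm I hI, ← Finset.sum_neg_distrib]
      apply Finset.sum_congr rfl
      intro e _
      ring
    have h := main (fun K => - d K) hharm' (- S.inf' hSne d)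
      (fun I hI => neg_le_neg (Finset.inf'_le d hI))
      Imin ⟨hImin, by simp [← hImin2]⟩
    simp only [neg_inj] at h
    exact h
  intro I hI J hJ
  have h1 : d I ≤ S.sup' hSne d := Finset.le_sup' d hI
  have h2 : S.inf' hSne d ≤ d I := Finset.inf'_le d hI
  have h3 : d J ≤ S.sup' hSne d := Finset.le_sup' d hJ
  have h4 : S.inf' hSne d ≤ d J := Finset.inf'_le d hJ
  rw [← hmax, ← hmin] at *
  linarith

end Aux

/-- under uniform initialization, the unique solution of the `η`-system
satisfies `η_{{i}} = 0` for singletons, and `η_I = (coalescence time from I)/N` for all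
`I` with `2 ≤ |I| ≤ D+1`. -/
theorem statement10 {N : ℕ} (hN : 0 < N) (p0 : Event N → ℝ) (hp0 : IsDist p0)
    (hfix : FixAxiom fun _ : St N => p0)
    (π : Fin N → ℝ) (hπ : IsRV p0 π)
    (D : ℕ) (hD : 1 ≤ D)
    (η : Finset (Fin N) → ℝ)
    (hη : EtaSystem p0 π
      (fun I => ∑ v : Fin N, (1 / (N : ℝ)) * (hatx π (oneAt v) - prodI (oneAt v) I)) D η) :
    (∀ i : Fin N, η {i} = 0) ∧
    ∀ I : Finset (Fin N), 2 ≤ I.card → I.card ≤ D + 1 →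
      η I = coalTime p0 I / N := by
  -- basic computations about the expectation term
  have hbv : ∀ v i : Fin N, bv (oneAt v i) = if i = v then (1:ℝ) else 0 := by
    intro v i
    unfold bv oneAt
    by_cases h : i = v <;> simp [h]
  have hhat : ∀ v : Fin N, hatx π (oneAt v) = π v := by
    intro v
    unfold hatx
    simp_rw [hbv]
    simp [mul_ite, Finset.sum_ite_eq']
  have hE1 : ∀ w : Fin N,
      (∑ v : Fin N, (1 / (N : ℝ)) * (hatx π (oneAt v) - prodI (oneAt v) {w})) = 0 := by
    intro w
    have hp : ∀ v, prodI (oneAt v) ({w} : Finset (Fin N)) = if w = v then (1:ℝ) else 0 := by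
      intro v
      unfold prodI
      rw [Finset.prod_singleton]
      exact hbv v w
    simp_rw [hhat, hp]
    rw [← Finset.mul_sum, Finset.sum_sub_distrib, hπ.2]
    simp
  have hE2 : ∀ I : Finset (Fin N), 2 ≤ I.card →
      (∑ v : Fin N, (1 / (N : ℝ)) * (hatx π (oneAt v) - prodI (oneAt v) I)) = 1 / N := by
    intro I hI
    have hp : ∀ v, prodI (oneAt v) I = 0 := by
      intro v
      obtain ⟨a, ha, b, hb, hab⟩ := Finset.one_lt_card.mp hI
      have hex : ∃ c ∈ I, c ≠ v := by
        by_cases h : a = v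
        · refine ⟨b, hb, fun hbv' => hab ?_⟩
          rw [h, hbv']
        · exact ⟨a, ha, h⟩
      obtain ⟨c, hc, hcv⟩ := hex
      apply Finset.prod_eq_zero hc
      unfold bv oneAt
      simp [hcv]
    simp_rw [hhat, hp, sub_zero]
    rw [← Finset.mul_sum, hπ.2, mul_one]
  -- Part 1 : singletons
  have hcard1 : ∀ i : Fin N, ({i} : Finset (Fin N)).card = 1 := fun i => Finset.card_singleton i
  set S1 : Finset (Finset (Fin N)) :=
    Finset.univ.image (fun i : Fin N => ({i} : Finset (Fin N))) with hS1
  have hmem1 : ∀ i : Fin N, ({i} : Finset (Fin N)) ∈ S1 := by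
    intro i
    rw [hS1]
    exact Finset.mem_image.mpr ⟨i, Finset.mem_univ i, rfl⟩
  have i00 : Fin N := ⟨0, hN⟩
  have hS1ne : S1.Nonempty := ⟨{i00}, hmem1 i00⟩
  have hS1non : ∀ I ∈ S1, I.Nonempty := by
    intro I hI
    rw [hS1] at hI
    obtain ⟨i, _, rfl⟩ := Finset.mem_image.mp hI
    exact Finset.singleton_nonempty i
  have hS1cl : ∀ I ∈ S1, ∀ e : Event N, I.image (extMap e) ∈ S1 := by
    intro I hI e
    rw [hS1] at hI
    obtain ⟨i, _, rfl⟩ := Finset.mem_image.mp hI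
    rw [Finset.image_singleton]
    exact hmem1 _
  have hharm1 : ∀ I ∈ S1, η I = ∑ e : Event N, p0 e * η (I.image (extMap e)) := by
    intro I hI
    rw [hS1] at hI
    obtain ⟨i, _, rfl⟩ := Finset.mem_image.mp hI
    have h := hη.1 {i} (by simp) (by simp <;> omega)
    simp only at h
    rw [hE1 i, zero_add] at h
    exact h
  have hconst1 := harm_eq p0 hp0 hfix S1 hS1ne hS1non hS1cl η hharm1
  have part1 : ∀ i : Fin N, η {i} = 0 := by
    intro j
    have hnorm := hη.2
    have hval : ∀ i : Fin N, η {i} = η {j} :=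
      fun i => hconst1 {i} (hmem1 i) {j} (hmem1 j)
    have : ∑ i, π i * η {i} = η {j} := by
      calc ∑ i, π i * η {i} = ∑ i, π i * η {j} := by
            apply Finset.sum_congr rfl
            intro i _
            rw [hval i]
        _ = (∑ i, π i) * η {j} := by rw [Finset.sum_mul]
        _ = η {j} := by rw [hπ.2, one_mul]
    rw [hnorm] at this
    exact this.symm
  refine ⟨part1, ?_⟩
  -- Part 2 : larger sets
  set S2 : Finset (Finset (Fin N)) :=
    Finset.univ.filter (fun I : Finset (Fin N) => 1 ≤ I.card ∧ I.card ≤ D + 1) with hS2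
  have hmem2 : ∀ I : Finset (Fin N), 1 ≤ I.card → I.card ≤ D + 1 → I ∈ S2 := by
    intro I h1 h2
    rw [hS2]
    simp only [Finset.mem_filter, Finset.mem_univ, true_and]
    exact ⟨h1, h2⟩
  have hS2ne : S2.Nonempty := ⟨{i00}, hmem2 _ (by simp) (by simp <;> omega)⟩
  have hS2non : ∀ I ∈ S2, I.Nonempty := by
    intro I hI
    rw [hS2] at hI
    simp only [Finset.mem_filter, Finset.mem_univ, true_and] at hI
    exact Finset.card_pos.mp hI.1
  have hS2cl : ∀ I ∈ S2, ∀ e : Event N, I.image (extMap e) ∈ S2 := by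
    intro I hI e
    rw [hS2] at hI
    simp only [Finset.mem_filter, Finset.mem_univ, true_and] at hI
    apply hmem2
    · exact Finset.card_pos.mpr ((Finset.card_pos.mp hI.1).image _)
    · exact le_trans Finset.card_image_le hI.2
  set d : Finset (Fin N) → ℝ := fun I => η I - coalTime p0 I / N with hd
  have hharm2 : ∀ I ∈ S2, d I = ∑ e : Event N, p0 e * d (I.image (extMap e)) := by
    intro I hI
    rw [hS2] at hI
    simp only [Finset.mem_filter, Finset.mem_univ, true_and] at hI
    have hη' := hη.1 I hI.1 hI.2
    simp only at hη'
    have hT := coal_rec p0 hp0 hfix I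
    have hEI : (∑ v : Fin N, (1 / (N : ℝ)) * (hatx π (oneAt v) - prodI (oneAt v) I))
        = (if 2 ≤ I.card then (1:ℝ) else 0) / N := by
      by_cases h2c : 2 ≤ I.card
      · rw [hE2 I h2c, if_pos h2c]
      · have hc1 : I.card = 1 := by omega
        obtain ⟨w, rfl⟩ := Finset.card_eq_one.mp hc1
        rw [hE1 w, if_neg h2c, zero_div]
    show η I - coalTime p0 I / N
      = ∑ e : Event N, p0 e * (η (I.image (extMap e)) - coalTime p0 (I.image (extMap e)) / N)
    have hRHS : ∑ e : Event N,
        p0 e * (η (I.image (extMap e)) - coalTime p0 (I.image (extMap e)) / N)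
        = (∑ e : Event N, p0 e * η (I.image (extMap e)))
          - (∑ e : Event N, p0 e * coalTime p0 (I.image (extMap e))) / N := by
      simp_rw [mul_sub, ← mul_div_assoc]
      rw [Finset.sum_sub_distrib, ← Finset.sum_div]
    rw [hRHS, hη', hEI, hT, add_div]
    ring
  have hconst2 := harm_eq p0 hp0 hfix S2 hS2ne hS2non hS2cl d hharm2
  intro I h2c hDc
  have hIS : I ∈ S2 := hmem2 I (by omega) hDc
  have hsing : ({i00} : Finset (Fin N)) ∈ S2 := hmem2 _ (by simp) (by simp <;> omega)
  have hdI : d I = d {i00} := hconst2 I hIS {i00} hsing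
  have hdsing : d {i00} = 0 := by
    show η {i00} - coalTime p0 {i00} / N = 0
    rw [part1 i00, coalTime_small p0 hp0 _ (by simp), zero_div, sub_zero]
  rw [hdsing] at hdI
  have hfin : η I - coalTime p0 I / N = 0 := hdI
  linarith

end Evo
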